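/- For any nonnegative integers r, t with t ≥ 1, and any nonnegative integer ℓ, one has ∑_{k=0}^{t} (-1)^k · C(r,k) · C(r-k, t-k) · (1/2)^t · [ℓ+1]^[k] · [ℓ+k+1]^[t-k] = 0, where [m]^[s] denotes the rising factorial m(m+1)···(m+s-1) with [m]^[0]=1, and the identity holds in any field of characteristic ≠ 2 (equivalently, as an identity of rational numbers). -/

import Mathlib

lemma asc_split (ℓ k t : ℕ) (hk : k ≤ t) :
    (ℓ + 1).ascFactorial k * (ℓ + k + 1).ascFactorial (t - k) = (ℓ + 1).ascFactorial t := by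
  have h := Nat.factorial_mul_ascFactorial ℓ k
  have h2 := Nat.factorial_mul_ascFactorial (ℓ + k) (t - k)
  have h3 := Nat.factorial_mul_ascFactorial ℓ t
  apply Nat.eq_of_mul_eq_mul_left (Nat.factorial_pos ℓ)
  rw [← Nat.mul_assoc, h, h2, Nat.add_assoc, Nat.add_sub_cancel' hk, h3]

theorem stmt0 (r t ℓ : ℕ) (ht : 1 ≤ t) (hrt : t ≤ r) :
    ∑ k ∈ Finset.range (t + 1),
      (-1 : ℚ) ^ k * (r.choose k) * ((r - k).choose (t - k)) * (1 / 2 : ℚ) ^ t *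
        ((ℓ + 1).ascFactorial k) * ((ℓ + k + 1).ascFactorial (t - k)) = 0 := by
  have key : ∀ k ∈ Finset.range (t + 1),
      (-1 : ℚ) ^ k * (r.choose k) * ((r - k).choose (t - k)) * (1 / 2 : ℚ) ^ t *
        ((ℓ + 1).ascFactorial k) * ((ℓ + k + 1).ascFactorial (t - k)) =
      ((-1 : ℚ) ^ k * (t.choose k)) *
        ((r.choose t) * (1 / 2 : ℚ) ^ t * ((ℓ + 1).ascFactorial t)) := by
    intro k hk
    rw [Finset.mem_range, Nat.lt_succ_iff] at hk
    have hc : (r.choose k : ℚ) * ((r - k).choose (t - k)) = (r.choose t) * (t.choose k) := by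
      rw [← Nat.cast_mul, ← Nat.choose_mul (n := r) hk, Nat.cast_mul]
    have ha : ((ℓ + 1).ascFactorial k : ℚ) * ((ℓ + k + 1).ascFactorial (t - k)) =
        ((ℓ + 1).ascFactorial t : ℚ) := by
      rw [← Nat.cast_mul, asc_split ℓ k t hk]
    calc (-1 : ℚ) ^ k * (r.choose k) * ((r - k).choose (t - k)) * (1 / 2 : ℚ) ^ t *
        ((ℓ + 1).ascFactorial k) * ((ℓ + k + 1).ascFactorial (t - k))
        = (-1 : ℚ) ^ k * ((r.choose k : ℚ) * ((r - k).choose (t - k))) * (1 / 2 : ℚ) ^ t *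
          (((ℓ + 1).ascFactorial k : ℚ) * ((ℓ + k + 1).ascFactorial (t - k))) := by ring
      _ = ((-1 : ℚ) ^ k * (t.choose k)) *
          ((r.choose t) * (1 / 2 : ℚ) ^ t * ((ℓ + 1).ascFactorial t)) := by
            rw [hc, ha]; ring
  rw [Finset.sum_congr rfl key, ← Finset.sum_mul]
  have hz : ∑ k ∈ Finset.range (t + 1), (-1 : ℚ) ^ k * (t.choose k) = 0 := by
    have := Int.alternating_sum_range_choose_of_ne (Nat.one_le_iff_ne_zero.mp ht) (n := t)
    have : ((∑ i ∈ Finset.range (t + 1), (-1 : ℤ) ^ i * t.choose i : ℤ) : ℚ) = 0 := by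
      rw [this]; norm_num
    push_cast at this
    convert this using 2
  rw [hz, zero_mul]
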